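/- Let F(c) = ∑_{i=1}^{n} p_i ∑_{t=0}^{N} exp(−ξ(θ − ω_i/ξ)·S_t(c) + B_{i,t}) where S_t(c) = ∑_{k=1}^{t} c_k and B_{i,t} are constants. If θξ ≥ max_i ω_i, then the front-loaded bang-bang schedule c* (c*_t = c_max for t ≤ k, c*_{k+1} = C_max − k·c_max, c*_t = 0 otherwise, k = ⌊C_max/c_max⌋) minimizes F over all c with 0 ≤ c_t ≤ c_max and ∑ c_t = C_max. -/

import Mathlib

open Finset Real

/-- Theorem 1, case 1: when `θξ ≥ max ωᵢ`, the front-loaded bang-bang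
chemotherapy schedule minimizes the total expected metastatic population. -/
theorem front_loaded_optimal_of_theta_xi_large
    (n N : ℕ) (p ω : ℕ → ℝ) (B : ℕ → ℕ → ℝ) (ξ θ cmax Cmax : ℝ)
    (hp : ∀ i, i < n → 0 < p i) (hω : ∀ i, i < n → 0 ≤ ω i)
    (hξ : 0 < ξ) (hθ : 0 < θ)
    (hcmax : 0 < cmax) (hC0 : 0 < Cmax) (hCN : Cmax < N * cmax)
    (hcond : ∀ i, i < n → ω i ≤ θ * ξ) :
    ∀ c : ℕ → ℝ,
      (∀ s, s < N → 0 ≤ c s ∧ c s ≤ cmax) →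
      (∑ s ∈ Finset.range N, c s = Cmax) →
      ∑ i ∈ Finset.range n, p i *
          ∑ t ∈ Finset.range (N + 1),
            Real.exp (-(ξ * (θ - ω i / ξ)) *
              (∑ k ∈ Finset.range t,
                (fun s => if s < ⌊Cmax / cmax⌋₊ then cmax
                  else if s = ⌊Cmax / cmax⌋₊ then Cmax - ⌊Cmax / cmax⌋₊ * cmax
                  else 0) k) + B i t) ≤
        ∑ i ∈ Finset.range n, p i *
          ∑ t ∈ Finset.range (N + 1),
            Real.exp (-(ξ * (θ - ω i / ξ)) *
              (∑ k ∈ Finset.range t, c k) + B i t) := by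
  intro c hc hsum
  set k0 := ⌊Cmax / cmax⌋₊ with hk0
  set cstar : ℕ → ℝ := fun s => if s < k0 then cmax
      else if s = k0 then Cmax - k0 * cmax else 0 with hcstar
  have hk0le : (k0 : ℝ) * cmax ≤ Cmax := by
    have h1 : (k0 : ℝ) ≤ Cmax / cmax := Nat.floor_le (le_of_lt (div_pos hC0 hcmax))
    calc (k0 : ℝ) * cmax ≤ (Cmax / cmax) * cmax :=
          mul_le_mul_of_nonneg_right h1 hcmax.le
      _ = Cmax := div_mul_cancel₀ _ hcmax.ne'
  -- key: partial sums of c are dominated by those of cstar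
  have key : ∀ t, t ≤ N →
      ∑ k ∈ Finset.range t, c k ≤ ∑ k ∈ Finset.range t, cstar k := by
    intro t ht
    by_cases htk : t ≤ k0
    · have hstar : ∑ k ∈ Finset.range t, cstar k = t * cmax := by
        rw [Finset.sum_congr rfl (fun k hk => ?_), Finset.sum_const,
          Finset.card_range, nsmul_eq_mul]
        have : k < k0 := lt_of_lt_of_le (Finset.mem_range.mp hk) htk
        simp [hcstar, this]
      rw [hstar]
      calc ∑ k ∈ Finset.range t, c k ≤ ∑ k ∈ Finset.range t, cmax := by
            apply Finset.sum_le_sum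
            intro k hk
            exact (hc k (lt_of_lt_of_le (Finset.mem_range.mp hk) ht)).2
        _ = t * cmax := by rw [Finset.sum_const, Finset.card_range, nsmul_eq_mul]
    · push_neg at htk
      have hstar : ∑ k ∈ Finset.range t, cstar k = Cmax := by
        have hsub : Finset.range (k0 + 1) ⊆ Finset.range t :=
          Finset.range_subset_range.mpr htk
        rw [← Finset.sum_subset hsub (fun x _ hx => ?_)]
        · rw [Finset.sum_range_succ]
          have h1 : ∑ k ∈ Finset.range k0, cstar k = k0 * cmax := by
            rw [Finset.sum_congr rfl (fun k hk => ?_), Finset.sum_const,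
              Finset.card_range, nsmul_eq_mul]
            simp [hcstar, Finset.mem_range.mp hk]
          rw [h1]
          simp [hcstar]
        · have hxlt : ¬ x < k0 := by
            intro h
            exact hx (Finset.mem_range.mpr (Nat.lt_succ_of_lt h))
          have hxne : x ≠ k0 := by
            intro h
            exact hx (Finset.mem_range.mpr (by omega))
          simp [hcstar, hxlt, hxne]
      rw [hstar, ← hsum]
      apply Finset.sum_le_sum_of_subset_of_nonneg (Finset.range_subset_range.mpr ht)
      intro k hk _
      exact (hc k (Finset.mem_range.mp hk)).1
  apply Finset.sum_le_sum
  intro i hi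
  have hpi := (hp i (Finset.mem_range.mp hi)).le
  apply mul_le_mul_of_nonneg_left _ hpi
  apply Finset.sum_le_sum
  intro t ht
  apply Real.exp_le_exp.mpr
  apply add_le_add_left
  have ha : 0 ≤ ξ * (θ - ω i / ξ) := by
    have : ξ * (θ - ω i / ξ) = θ * ξ - ω i := by
      field_simp
    rw [this]
    linarith [hcond i (Finset.mem_range.mp hi)]
  have hS := key t (Nat.lt_succ_iff.mp (Finset.mem_range.mp ht))
  nlinarith [mul_le_mul_of_nonneg_left hS ha]
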